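/- Let 𝒩 > 0 be real and m, n ∈ ℕ with m ≠ n, m + n < 2𝒩, m < 𝒩 + 1/2 and n < 𝒩 + 1/2. Then ∫_{−∞}^{+∞} ℋ_n^𝒩(X) · ℋ_m^𝒩(X) · (1 + X²/𝒩)^{−𝒩−1/2} dX = 0. -/

import Mathlib

open Real MeasureTheory Filter

/-- Relativistic Hermite polynomial via its Rodrigues formula. -/
noncomputable def relHermite (n : ℕ) (N : ℝ) (X : ℝ) : ℝ :=
  (-1 : ℝ)^n * (1 + X^2/N)^(N + (n : ℝ)) *
    iteratedDeriv n (fun t : ℝ => (1 + t^2/N)^(-N)) X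

/-- Cariñena polynomial with positive parameter via its Rodrigues formula. -/
noncomputable def carinenaPos (n : ℕ) (𝒩 : ℝ) (X : ℝ) : ℝ :=
  (-1 : ℝ)^n * (1 + X^2/𝒩)^(𝒩 + 1/2) *
    iteratedDeriv n (fun t : ℝ => (1 + t^2/𝒩)^((n : ℝ) - 𝒩 - 1/2)) X

/-- Cariñena polynomial with negative parameter 𝒩 = -ν via its Rodrigues formula. -/
noncomputable def carinenaNeg (n : ℕ) (ν : ℝ) (X : ℝ) : ℝ :=
  (-1 : ℝ)^n * (1 - X^2/ν)^((1:ℝ)/2 - ν) *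
    iteratedDeriv n (fun t : ℝ => (1 - t^2/ν)^((n : ℝ) + ν - 1/2)) X

/-- The constant α_{n,ν} = (2ν)_n / (2^n n! (ν+1/2)_n). -/
noncomputable def alphaConst (n : ℕ) (ν : ℝ) : ℝ :=
  (ascPochhammer ℝ n).eval (2*ν) /
    (2^n * (n.factorial : ℝ) * (ascPochhammer ℝ n).eval (ν + 1/2))

/-- Gegenbauer polynomial via its Rodrigues formula. -/
noncomputable def gegenbauer (n : ℕ) (ν : ℝ) (X : ℝ) : ℝ :=
  alphaConst n ν * (-1 : ℝ)^n * (1 - X^2)^((1:ℝ)/2 - ν) *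
    iteratedDeriv n (fun t : ℝ => (1 - t^2)^((n : ℝ) + ν - 1/2)) X

section CarinenaProof
open Polynomial Topology



lemma hpos (𝒩 : ℝ) (h𝒩 : 0 < 𝒩) (x : ℝ) : 0 < 1 + x^2/𝒩 := by positivity

noncomputable def QP (𝒩 a : ℝ) : ℕ → Polynomial ℝ
  | 0 => 1
  | k+1 => Polynomial.derivative (QP 𝒩 a k) * (1 + Polynomial.C (1/𝒩) * Polynomial.X^2)
      + Polynomial.C (2*(a-k)/𝒩) * Polynomial.X * QP 𝒩 a k

lemma QP_natDegree (𝒩 a : ℝ) : ∀ k, (QP 𝒩 a k).natDegree ≤ k := by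
  intro k
  induction k with
  | zero => simp [QP]
  | succ k ih =>
    refine (natDegree_add_le _ _).trans (max_le ?_ ?_)
    · by_cases h : Polynomial.derivative (QP 𝒩 a k) = 0
      · simp [h]
      · have hd0 : (QP 𝒩 a k).natDegree ≠ 0 := by
          intro h0
          obtain ⟨c, hc⟩ := Polynomial.natDegree_eq_zero.mp h0
          exact h (by simp [← hc])
        have h3 := Polynomial.natDegree_derivative_lt hd0
        have h2 : (1 + Polynomial.C (1/𝒩) * Polynomial.X^2 : Polynomial ℝ).natDegree ≤ 2 := by
          refine (natDegree_add_le _ _).trans (max_le (by simp) ?_)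
          refine (natDegree_mul_le).trans ?_
          simp [Polynomial.natDegree_X_pow]
        refine (natDegree_mul_le).trans ?_
        omega
    · refine (natDegree_mul_le).trans ?_
      have : (Polynomial.C (2*(a-↑k)/𝒩) * Polynomial.X : Polynomial ℝ).natDegree ≤ 1 :=
        (natDegree_mul_le).trans (by simp)
      omega

lemma hasDerivAt_polyRpow (𝒩 b : ℝ) (h𝒩 : 0 < 𝒩) (P : Polynomial ℝ) (x : ℝ) :
    HasDerivAt (fun X => P.eval X * (1+X^2/𝒩)^b)
      (((Polynomial.derivative P).eval x * (1+x^2/𝒩) + (2*b/𝒩)*x*P.eval x) * (1+x^2/𝒩)^(b-1))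
      x := by
  have hp := hpos 𝒩 h𝒩 x
  have h1 : HasDerivAt (fun X:ℝ => 1+X^2/𝒩) (2*x/𝒩) x := by
    have := ((hasDerivAt_pow 2 x).div_const 𝒩).const_add 1
    simpa using this.congr_deriv (by ring)
  have h2 : HasDerivAt (fun X:ℝ => (1+X^2/𝒩)^b) ((2*x/𝒩) * b * (1+x^2/𝒩)^(b-1)) x :=
    h1.rpow_const (Or.inl hp.ne')
  have h3 := (P.hasDerivAt x).mul h2
  convert h3 using 1 <;> try rfl
  have hr : (1+x^2/𝒩)^b = (1+x^2/𝒩) * (1+x^2/𝒩)^(b-1) := by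
    rw [Real.rpow_sub hp, Real.rpow_one]
    field_simp
  rw [hr]; ring

lemma iteratedDeriv_g (𝒩 a : ℝ) (h𝒩 : 0 < 𝒩) : ∀ k,
    iteratedDeriv k (fun t : ℝ => (1+t^2/𝒩)^a)
      = fun X => (QP 𝒩 a k).eval X * (1+X^2/𝒩)^(a - k) := by
  intro k
  induction k with
  | zero => simp [QP]
  | succ k ih =>
    rw [iteratedDeriv_succ, ih]
    funext X
    rw [(hasDerivAt_polyRpow 𝒩 (a - k) h𝒩 (QP 𝒩 a k) X).deriv]
    have he : a - (k:ℝ) - 1 = a - ((k+1 : ℕ):ℝ) := by push_cast; ring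
    rw [he]
    simp only [QP, Polynomial.eval_add, Polynomial.eval_mul, Polynomial.eval_one,
      Polynomial.eval_C, Polynomial.eval_X, Polynomial.eval_pow]
    ring





lemma bound_polyRpow (𝒩 b : ℝ) (h𝒩 : 0 < 𝒩) (hb : b ≤ 0) (P : Polynomial ℝ) :
    ∃ C : ℝ, ∀ X : ℝ, |P.eval X * (1 + X^2/𝒩)^b|
      ≤ C * (1+|X|)^((P.natDegree : ℝ) + 2*b) := by
  classical
  set d := P.natDegree with hd
  set S : ℝ := ∑ i ∈ Finset.range (d+1), |P.coeff i| with hS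
  set K : ℝ := 2 * max 1 𝒩 with hK
  have hK0 : 0 < K := by positivity
  refine ⟨S * K^(-b), fun X => ?_⟩
  have h1x : (1:ℝ) ≤ 1 + |X| := by have := abs_nonneg X; linarith
  have h0x : (0:ℝ) < 1 + |X| := by positivity
  have hpoly : |P.eval X| ≤ S * (1+|X|)^d := by
    rw [Polynomial.eval_eq_sum_range]
    refine (Finset.abs_sum_le_sum_abs _ _).trans ?_
    rw [hS, Finset.sum_mul]
    refine Finset.sum_le_sum fun i hi => ?_
    rw [abs_mul, abs_pow]
    refine mul_le_mul_of_nonneg_left ?_ (abs_nonneg _)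
    calc |X|^i ≤ (1+|X|)^i := pow_le_pow_left₀ (abs_nonneg _) (by linarith) i
      _ ≤ (1+|X|)^d := pow_le_pow_right₀ h1x (by have := Finset.mem_range.mp hi; omega)
  have hsq : (1+|X|)^(2:ℕ) / K ≤ 1 + X^2/𝒩 := by
    rw [div_le_iff₀ hK0]
    have hm1 : (1:ℝ) ≤ max 1 𝒩 := le_max_left _ _
    have hm2 : 𝒩 ≤ max 1 𝒩 := le_max_right _ _
    have hx2 : X^2/𝒩 * 𝒩 = X^2 := by field_simp
    have h2ax : 2*|X| ≤ 1 + X^2 := by nlinarith [sq_nonneg (1 - |X|), sq_abs X]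
    have hX2 : X^2 ≤ max 1 𝒩 * (X^2/𝒩) := by
      have hnn := div_nonneg (sq_nonneg X) h𝒩.le
      calc X^2 = 𝒩 * (X^2/𝒩) := by field_simp
        _ ≤ max 1 𝒩 * (X^2/𝒩) := mul_le_mul_of_nonneg_right hm2 hnn
    nlinarith [sq_abs X, div_nonneg (sq_nonneg X) h𝒩.le]
  have hrpow : (1 + X^2/𝒩)^b ≤ K^(-b) * (1+|X|)^(2*b) := by
    have h := Real.rpow_le_rpow_of_nonpos (by positivity) hsq hb
    refine h.trans_eq ?_
    rw [Real.div_rpow (by positivity) hK0.le, ← Real.rpow_natCast (1+|X|) 2,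
      ← Real.rpow_mul h0x.le, Real.rpow_neg hK0.le]
    push_cast
    rw [div_eq_mul_inv, mul_comm]
  calc |P.eval X * (1 + X^2/𝒩)^b| = |P.eval X| * (1 + X^2/𝒩)^b := by
        rw [abs_mul, abs_of_nonneg (Real.rpow_nonneg (hpos 𝒩 h𝒩 X).le b)]
    _ ≤ (S * (1+|X|)^d) * (K^(-b) * (1+|X|)^(2*b)) := by
        refine mul_le_mul hpoly hrpow (Real.rpow_nonneg (hpos 𝒩 h𝒩 X).le b) ?_
        positivity
    _ = S * K^(-b) * ((1+|X|)^(d:ℝ) * (1+|X|)^(2*b)) := by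
        rw [← Real.rpow_natCast (1+|X|) d]; ring
    _ = S * K^(-b) * (1+|X|)^((d:ℝ) + 2*b) := by
        rw [← Real.rpow_add h0x]

lemma integrable_polyRpow (𝒩 b : ℝ) (h𝒩 : 0 < 𝒩) (hb : b ≤ 0) (P : Polynomial ℝ)
    (hd : (P.natDegree : ℝ) + 2*b < -1) :
    Integrable (fun X : ℝ => P.eval X * (1 + X^2/𝒩)^b) := by
  obtain ⟨C, hC⟩ := bound_polyRpow 𝒩 b h𝒩 hb P
  set e : ℝ := (P.natDegree : ℝ) + 2*b with he
  have hr : (Module.finrank ℝ ℝ : ℝ) < -e := by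
    simp only [Module.finrank_self, Nat.cast_one]
    linarith
  have hmaj : Integrable (fun X : ℝ => C * (1 + ‖X‖)^(-(-e))) :=
    (integrable_one_add_norm hr).const_mul C
  refine hmaj.mono' ?_ ?_
  · refine Continuous.aestronglyMeasurable ?_
    exact P.continuous.mul
      ((continuous_const.add ((continuous_pow 2).div_const 𝒩)).rpow_const
        (fun x => Or.inl (hpos 𝒩 h𝒩 x).ne'))
  · filter_upwards with X
    rw [Real.norm_eq_abs]
    simpa [Real.norm_eq_abs] using hC X

lemma tendsto_polyRpow (𝒩 b : ℝ) (h𝒩 : 0 < 𝒩) (hb : b ≤ 0) (P : Polynomial ℝ)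
    (hd : (P.natDegree : ℝ) + 2*b < 0) (l : Filter ℝ)
    (hl : Tendsto (fun X : ℝ => 1 + |X|) l atTop) :
    Tendsto (fun X : ℝ => P.eval X * (1 + X^2/𝒩)^b) l (𝓝 0) := by
  obtain ⟨C, hC⟩ := bound_polyRpow 𝒩 b h𝒩 hb P
  set e : ℝ := (P.natDegree : ℝ) + 2*b with he
  have h1 : Tendsto (fun X : ℝ => C * (1+|X|)^e) l (𝓝 0) := by
    have h2 : Tendsto (fun y : ℝ => y ^ (-(-e))) atTop (𝓝 0) :=
      tendsto_rpow_neg_atTop (by linarith)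
    simp only [neg_neg] at h2
    simpa using (h2.comp hl).const_mul C
  refine squeeze_zero_norm (fun X => ?_) h1
  rw [Real.norm_eq_abs]
  exact hC X

lemma key_integral (𝒩 : ℝ) (h𝒩 : 0 < 𝒩) (a : ℝ) (ha0 : a < 0) :
    ∀ k, ∀ P : Polynomial ℝ, P.natDegree < k →
      ∫ X : ℝ, P.eval X * iteratedDeriv k (fun t : ℝ => (1+t^2/𝒩)^a) X = 0 := by
  intro k
  induction k with
  | zero => exact fun P hP => absurd hP (Nat.not_lt_zero _)
  | succ k ih =>
    intro P hP
    have hP' : P.natDegree ≤ k := by omega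
    have hQk := QP_natDegree 𝒩 a k
    have hQk1 := QP_natDegree 𝒩 a (k+1)
    have hu : ∀ x : ℝ, HasDerivAt (fun X => P.eval X) ((Polynomial.derivative P).eval x) x :=
      fun x => P.hasDerivAt x
    have hv : ∀ x : ℝ, HasDerivAt (iteratedDeriv k (fun t : ℝ => (1+t^2/𝒩)^a))
        (iteratedDeriv (k+1) (fun t : ℝ => (1+t^2/𝒩)^a) x) x := by
      intro x
      have h2 : HasDerivAt (iteratedDeriv k (fun t : ℝ => (1+t^2/𝒩)^a))
          ((((Polynomial.derivative (QP 𝒩 a k)).eval x) * (1+x^2/𝒩)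
            + (2*(a-(k:ℝ))/𝒩)*x*(QP 𝒩 a k).eval x) * (1+x^2/𝒩)^(a-(k:ℝ)-1)) x := by
        rw [iteratedDeriv_g 𝒩 a h𝒩 k]
        exact hasDerivAt_polyRpow 𝒩 (a-(k:ℝ)) h𝒩 (QP 𝒩 a k) x
      have h3 := h2.deriv
      rw [iteratedDeriv_succ, h3]
      exact h2
    have hint1 : Integrable (fun X : ℝ =>
        P.eval X * iteratedDeriv (k+1) (fun t : ℝ => (1+t^2/𝒩)^a) X) := by
      simp only [iteratedDeriv_g 𝒩 a h𝒩]
      have hdeg : (P * QP 𝒩 a (k+1)).natDegree ≤ k + (k+1) :=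
        natDegree_mul_le.trans (add_le_add hP' hQk1)
      have hdegR : ((P * QP 𝒩 a (k+1)).natDegree : ℝ) ≤ 2*(k:ℝ) + 1 := by
        calc ((P * QP 𝒩 a (k+1)).natDegree : ℝ) ≤ ((k + (k+1) : ℕ) : ℝ) := by
              exact_mod_cast hdeg
          _ = 2*(k:ℝ) + 1 := by push_cast; ring
      have h := integrable_polyRpow 𝒩 (a - ((k+1:ℕ):ℝ)) h𝒩
        (by push_cast; linarith) (P * QP 𝒩 a (k+1))
        (by push_cast at hdegR ⊢; linarith)
      simpa [Polynomial.eval_mul, mul_assoc] using h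
    have hint2 : Integrable (fun X : ℝ =>
        (Polynomial.derivative P).eval X * iteratedDeriv k (fun t : ℝ => (1+t^2/𝒩)^a) X) := by
      by_cases hP0 : Polynomial.derivative P = 0
      · simpa [hP0] using integrable_zero ℝ ℝ (volume : Measure ℝ)
      · have hnd0 : P.natDegree ≠ 0 := by
          intro h0
          obtain ⟨c, hc⟩ := Polynomial.natDegree_eq_zero.mp h0
          exact hP0 (by simp [← hc])
        have hd1 := Polynomial.natDegree_derivative_lt hnd0
        simp only [iteratedDeriv_g 𝒩 a h𝒩]
        have hdeg : (Polynomial.derivative P * QP 𝒩 a k).natDegree + 1 ≤ 2*k := by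
          have := natDegree_mul_le (p := Polynomial.derivative P) (q := QP 𝒩 a k)
          omega
        have hdegR : ((Polynomial.derivative P * QP 𝒩 a k).natDegree : ℝ) ≤ 2*(k:ℝ) - 1 := by
          have : (((Polynomial.derivative P * QP 𝒩 a k).natDegree + 1 : ℕ) : ℝ)
              ≤ ((2*k : ℕ) : ℝ) := by exact_mod_cast hdeg
          push_cast at this; linarith
        have h := integrable_polyRpow 𝒩 (a - (k:ℝ)) h𝒩 (by linarith)
          (Polynomial.derivative P * QP 𝒩 a k) (by linarith)
        simpa [Polynomial.eval_mul, mul_assoc] using h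
    have hbt : ∀ l : Filter ℝ, Tendsto (fun X : ℝ => 1 + |X|) l atTop →
        Tendsto (fun X : ℝ =>
          P.eval X * iteratedDeriv k (fun t : ℝ => (1+t^2/𝒩)^a) X) l (𝓝 0) := by
      intro l hl
      simp only [iteratedDeriv_g 𝒩 a h𝒩]
      have hdeg : (P * QP 𝒩 a k).natDegree ≤ k + k :=
        natDegree_mul_le.trans (add_le_add hP' hQk)
      have hdegR : ((P * QP 𝒩 a k).natDegree : ℝ) ≤ 2*(k:ℝ) := by
        calc ((P * QP 𝒩 a k).natDegree : ℝ) ≤ ((k + k : ℕ) : ℝ) := by exact_mod_cast hdeg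
          _ = 2*(k:ℝ) := by push_cast; ring
      have h := tendsto_polyRpow 𝒩 (a - (k:ℝ)) h𝒩 (by linarith) (P * QP 𝒩 a k)
        (by linarith) l hl
      simpa [Polynomial.eval_mul, mul_assoc] using h
    have hbot := hbt atBot (tendsto_atTop_add_const_left _ 1 tendsto_abs_atBot_atTop)
    have htop := hbt atTop (tendsto_atTop_add_const_left _ 1 tendsto_abs_atTop_atTop)
    have hIBP := MeasureTheory.integral_mul_deriv_eq_deriv_mul (fun x _ => hu x) (fun x _ => hv x) hint1 hint2 hbot htop
    rw [hIBP]
    by_cases hP0 : Polynomial.derivative P = 0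
    · simp [hP0]
    · have hnd0 : P.natDegree ≠ 0 := by
        intro h0
        obtain ⟨c, hc⟩ := Polynomial.natDegree_eq_zero.mp h0
        exact hP0 (by simp [← hc])
      have hd1 := Polynomial.natDegree_derivative_lt hnd0
      rw [ih (Polynomial.derivative P) (by omega)]
      simp

lemma aux_main (𝒩 : ℝ) (h𝒩 : 0 < 𝒩) (m n : ℕ) (hlt : m < n)
    (hn : (n : ℝ) < 𝒩 + 1/2) :
    ∫ X : ℝ, carinenaPos n 𝒩 X * carinenaPos m 𝒩 X * (1 + X^2/𝒩)^(-𝒩 - 1/2) = 0 := by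
  have hrw : ∀ X : ℝ, carinenaPos n 𝒩 X * carinenaPos m 𝒩 X * (1 + X^2/𝒩)^(-𝒩 - 1/2)
      = ((-1:ℝ)^n * (-1:ℝ)^m) * ((QP 𝒩 ((m:ℝ) - 𝒩 - 1/2) m).eval X *
          iteratedDeriv n (fun t : ℝ => (1 + t^2/𝒩)^((n:ℝ) - 𝒩 - 1/2)) X) := by
    intro X
    have hx := hpos 𝒩 h𝒩 X
    have hcomb : (1+X^2/𝒩)^(𝒩+1/2) * (1+X^2/𝒩)^(𝒩+1/2)
        * (1+X^2/𝒩)^(((m:ℝ)-𝒩-1/2)-(m:ℝ)) * (1+X^2/𝒩)^(-𝒩-1/2) = 1 := by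
      rw [← Real.rpow_add hx, ← Real.rpow_add hx, ← Real.rpow_add hx,
        show (𝒩+1/2) + (𝒩+1/2) + (((m:ℝ)-𝒩-1/2)-(m:ℝ)) + (-𝒩-1/2) = (0:ℝ) by ring,
        Real.rpow_zero]
    rw [carinenaPos, carinenaPos, iteratedDeriv_g 𝒩 ((m:ℝ) - 𝒩 - 1/2) h𝒩 m]
    linear_combination ((-1:ℝ)^n * (-1:ℝ)^m * (QP 𝒩 ((m:ℝ) - 𝒩 - 1/2) m).eval X *
      iteratedDeriv n (fun t : ℝ => (1 + t^2/𝒩)^((n:ℝ) - 𝒩 - 1/2)) X) * hcomb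
  calc ∫ X : ℝ, carinenaPos n 𝒩 X * carinenaPos m 𝒩 X * (1 + X^2/𝒩)^(-𝒩 - 1/2)
      = ∫ X : ℝ, ((-1:ℝ)^n * (-1:ℝ)^m) * ((QP 𝒩 ((m:ℝ) - 𝒩 - 1/2) m).eval X *
          iteratedDeriv n (fun t : ℝ => (1 + t^2/𝒩)^((n:ℝ) - 𝒩 - 1/2)) X) := by
        congr 1; funext X; exact hrw X
    _ = ((-1:ℝ)^n * (-1:ℝ)^m) * ∫ X : ℝ, (QP 𝒩 ((m:ℝ) - 𝒩 - 1/2) m).eval X *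
          iteratedDeriv n (fun t : ℝ => (1 + t^2/𝒩)^((n:ℝ) - 𝒩 - 1/2)) X :=
        MeasureTheory.integral_const_mul _ _
    _ = 0 := by
        rw [key_integral 𝒩 h𝒩 ((n:ℝ) - 𝒩 - 1/2) (by linarith) n
          (QP 𝒩 ((m:ℝ) - 𝒩 - 1/2) m) (lt_of_le_of_lt (QP_natDegree _ _ m) hlt)]
        ring


theorem carinena_pos_orthogonality (𝒩 : ℝ) (h𝒩 : 0 < 𝒩) (m n : ℕ) (hmn : m ≠ n)
    (hint : (m : ℝ) + n < 2 * 𝒩)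
    (hm : (m : ℝ) < 𝒩 + 1/2) (hn : (n : ℝ) < 𝒩 + 1/2) :
    ∫ X : ℝ, carinenaPos n 𝒩 X * carinenaPos m 𝒩 X * (1 + X^2/𝒩)^(-𝒩 - 1/2) = 0 := by
  rcases hmn.lt_or_gt with h | h
  · exact aux_main 𝒩 h𝒩 m n h hn
  · rw [show (fun X : ℝ => carinenaPos n 𝒩 X * carinenaPos m 𝒩 X * (1 + X^2/𝒩)^(-𝒩 - 1/2))
        = (fun X : ℝ => carinenaPos m 𝒩 X * carinenaPos n 𝒩 X * (1 + X^2/𝒩)^(-𝒩 - 1/2))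
      from funext fun X => by ring]
    exact aux_main 𝒩 h𝒩 n m h hm

end CarinenaProof
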